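/- Define Cn_LM(K) := {α ∈ L• : R*_K ⊨ α}. Then for every knowledge base K ⊆ L• each of whose members is in normal form: (i) K ⊆ Cn_LM(K) (Inclusion); (ii) Cn0(K) ⊆ Cn_LM(K) (Ampliativeness); (iii) for every purely propositional α ∈ L, •⊤ → α ∈ Cn_LM(K) iff •⊤ → α ∈ Cn0(K) (Typical Entailment); and (iv) for every K' ⊆ L• each of whose members is in normal form, if K ⊆ K' ⊆ Cn_LM(K), then Cn_LM(K') = Cn_LM(K) (Cumulativity). -/

import Mathlib

attribute [local instance] Classical.propDecidable

universe u

/-- Sentences of Propositional Typicality Logic over atoms `P`. -/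
inductive PTL (P : Type u) : Type u
  | atom : P → PTL P
  | neg  : PTL P → PTL P
  | conj : PTL P → PTL P → PTL P
  | top  : PTL P
  | bot  : PTL P
  | typ  : PTL P → PTL P

namespace PTL

/-- Material implication, defined from `¬` and `∧`. -/
def impl {P : Type u} (a b : PTL P) : PTL P := neg (conj a (neg b))

/-- Disjunction, defined from `¬` and `∧`. -/
def disj {P : Type u} (a b : PTL P) : PTL P := neg (conj (neg a) (neg b))

/-- Purely propositional sentences: no occurrence of the typicality operator. -/
def IsProp {P : Type u} : PTL P → Prop
  | atom _ => True
  | neg a => IsProp a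
  | conj a b => IsProp a ∧ IsProp b
  | top => True
  | bot => True
  | typ _ => False

end PTL

/-- Propositional valuations. -/
abbrev Val (P : Type u) := P → Bool

/-- Satisfaction of a PTL sentence by a valuation, relative to a ranking
function `rho : Val P → ℕ∞`. -/
def satR {P : Type u} (rho : Val P → ℕ∞) : Val P → PTL P → Prop
  | v, PTL.atom p => v p = true
  | v, PTL.neg a => ¬ satR rho v a
  | v, PTL.conj a b => satR rho v a ∧ satR rho v b
  | _, PTL.top => True
  | _, PTL.bot => False
  | v, PTL.typ a => satR rho v a ∧ ∀ v', rho v' < rho v → ¬ satR rho v' a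

/-- The convexity property of ranking functions. -/
def RkConvex {P : Type u} (rho : Val P → ℕ∞) : Prop :=
  ∀ (v : Val P) (i : ℕ), rho v = (i : ℕ∞) → ∀ j : ℕ, j < i → ∃ v', rho v' = (j : ℕ∞)

/-- A ranked interpretation: a convex ranking function on valuations. -/
structure RankedInterp (P : Type u) where
  rk : Val P → ℕ∞
  convex : RkConvex rk

/-- `rho` is a ranked model of `a`: every possible valuation satisfies `a`. -/
def modelsR {P : Type u} (rho : Val P → ℕ∞) (a : PTL P) : Prop :=
  ∀ v, rho v < ⊤ → satR rho v a

/-- `R ⊨ a`. -/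
def RankedInterp.models {P : Type u} (R : RankedInterp P) (a : PTL P) : Prop :=
  modelsR R.rk a

/-- `R` is a ranked model of the knowledge base `K`. -/
def modelsSet {P : Type u} (R : RankedInterp P) (K : Set (PTL P)) : Prop :=
  ∀ a ∈ K, R.models a

/-- Ranked entailment consequences of `K`. -/
def Cn0 {P : Type u} (K : Set (PTL P)) : Set (PTL P) :=
  {a | ∀ R : RankedInterp P, modelsSet R K → R.models a}

/-- Conjunction of a list of sentences (empty conjunction is `⊤`). -/
def bigConj {P : Type u} : List (PTL P) → PTL P
  | [] => PTL.top
  | a :: l => PTL.conj a (bigConj l)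

/-- Disjunction of a list of sentences (empty disjunction is `⊥`). -/
def bigDisj {P : Type u} : List (PTL P) → PTL P
  | [] => PTL.bot
  | a :: l => PTL.disj a (bigDisj l)

/-- `a` is in normal form: `⋀_{i≤t} •θᵢ → (φ ∨ ⋁_{i≤s} •ψᵢ)` with all the
`θᵢ`, `φ`, `ψᵢ` purely propositional. -/
def InNormalForm {P : Type u} (a : PTL P) : Prop :=
  ∃ (ths : List (PTL P)) (phi : PTL P) (pss : List (PTL P)),
    (∀ t ∈ ths, t.IsProp) ∧ phi.IsProp ∧ (∀ s ∈ pss, s.IsProp) ∧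
    a = PTL.impl (bigConj (ths.map PTL.typ)) (PTL.disj phi (bigDisj (pss.map PTL.typ)))

/-- `R^1_S`: increase by one the rank of every valuation not in `S`. -/
noncomputable def bump {P : Type u} (rho : Val P → ℕ∞) (S : Set (Val P)) : Val P → ℕ∞ :=
  fun v => if v ∈ S then rho v else rho v + 1

/-- `R^∞_S`: make every valuation not in `S` impossible. -/
noncomputable def toInf {P : Type u} (rho : Val P → ℕ∞) (S : Set (Val P)) : Val P → ℕ∞ :=
  fun v => if v ∈ S then rho v else ⊤

/-- `⟦K⟧_rho`: the possible valuations satisfying every member of `K`. -/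
def KExt {P : Type u} (K : Set (PTL P)) (rho : Val P → ℕ∞) : Set (Val P) :=
  {v | rho v < ⊤ ∧ ∀ a ∈ K, satR rho v a}

/-- The sequence `R_i` of the LM-minimal construction. -/
noncomputable def Rseq {P : Type u} (K : Set (PTL P)) : ℕ → Val P → ℕ∞
  | 0 => fun _ => 0
  | i + 1 => bump (Rseq K i) (KExt K (Rseq K i))

/-- The sequence `S_i` of the LM-minimal construction:
`S_0 = ∅`, `S_{i+1} = ⟦K⟧_{R_i}`. -/
noncomputable def Sseq {P : Type u} (K : Set (PTL P)) : ℕ → Set (Val P)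
  | 0 => ∅
  | i + 1 => KExt K (Rseq K i)

/-- The least `i ≥ 1` with `S_i = S_{i-1}`. -/
noncomputable def stopIdx {P : Type u} (K : Set (PTL P)) : ℕ :=
  sInf {i : ℕ | 1 ≤ i ∧ Sseq K i = Sseq K (i - 1)}

/-- The LM-minimal ranked interpretation `R*_K := (R_{i-1})^∞_{S_i}`. -/
noncomputable def Rstar {P : Type u} (K : Set (PTL P)) : Val P → ℕ∞ :=
  toInf (Rseq K (stopIdx K - 1)) (Sseq K (stopIdx K))

/-- LM-entailment consequences of `K`: sentences holding in `R*_K`. -/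
def CnLM {P : Type u} (K : Set (PTL P)) : Set (PTL P) :=
  {a | modelsR (Rstar K) a}

section Aux

variable {P : Type u}

lemma satR_prop_congr {a : PTL P} (h : a.IsProp) (ρ ρ' : Val P → ℕ∞) (v : Val P) :
    satR ρ v a ↔ satR ρ' v a := by
  induction a with
  | atom p => simp [satR]
  | neg a ih => simp only [satR]; exact not_congr (ih h)
  | conj a b iha ihb => simp only [satR]; exact and_congr (iha h.1) (ihb h.2)
  | top => simp [satR]
  | bot => simp [satR]
  | typ a ih => exact absurd h (by simp [PTL.IsProp])

lemma satR_impl {ρ : Val P → ℕ∞} {v : Val P} {a b : PTL P} :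
    satR ρ v (PTL.impl a b) ↔ (satR ρ v a → satR ρ v b) := by
  simp only [PTL.impl, satR]; tauto

lemma satR_disj {ρ : Val P → ℕ∞} {v : Val P} {a b : PTL P} :
    satR ρ v (PTL.disj a b) ↔ (satR ρ v a ∨ satR ρ v b) := by
  simp only [PTL.disj, satR]; tauto

lemma satR_bigConj {ρ : Val P → ℕ∞} {v : Val P} {l : List (PTL P)} :
    satR ρ v (bigConj l) ↔ ∀ x ∈ l, satR ρ v x := by
  induction l with
  | nil => simp [bigConj, satR]
  | cons a l ih => simp [bigConj, satR, ih]

lemma satR_bigDisj {ρ : Val P → ℕ∞} {v : Val P} {l : List (PTL P)} :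
    satR ρ v (bigDisj l) ↔ ∃ x ∈ l, satR ρ v x := by
  induction l with
  | nil => simp [bigDisj, satR]
  | cons a l ih => simp [bigDisj, satR_disj, ih]

lemma satR_nf {ρ : Val P → ℕ∞} {v : Val P} {ths pss : List (PTL P)} {phi : PTL P} :
    satR ρ v (PTL.impl (bigConj (ths.map PTL.typ)) (PTL.disj phi (bigDisj (pss.map PTL.typ)))) ↔
      ((∀ θ ∈ ths, satR ρ v (PTL.typ θ)) →
        (satR ρ v phi ∨ ∃ ψ ∈ pss, satR ρ v (PTL.typ ψ))) := by
  rw [satR_impl, satR_disj, satR_bigConj, satR_bigDisj]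
  constructor
  · intro h hant
    rcases h (fun x hx => by obtain ⟨θ, hθ, rfl⟩ := List.mem_map.mp hx; exact hant θ hθ)
      with h1 | ⟨x, hx, h2⟩
    · exact Or.inl h1
    · obtain ⟨ψ, hψ, rfl⟩ := List.mem_map.mp hx
      exact Or.inr ⟨ψ, hψ, h2⟩
  · intro h hant
    rcases h (fun θ hθ => hant _ (List.mem_map_of_mem hθ)) with h1 | ⟨ψ, hψ, h2⟩
    · exact Or.inl h1
    · exact Or.inr ⟨_, List.mem_map_of_mem hψ, h2⟩

lemma typ_pres {ρ ρ' : Val P → ℕ∞} {S : Set (Val P)} {c : ℕ∞}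
    (H1 : ∀ u, ρ u ≤ c) (H2 : ∀ u, u ∉ S → ρ u = c)
    (H3 : ∀ u ∈ S, ρ' u = ρ u) (H4 : ∀ u, u ∉ S → ρ u ≤ ρ' u)
    {v : Val P} (hv : v ∈ S) {θ : PTL P} (hθ : θ.IsProp) :
    satR ρ' v (PTL.typ θ) ↔ satR ρ v (PTL.typ θ) := by
  have hρv : ρ' v = ρ v := H3 v hv
  simp only [satR]
  constructor
  · rintro ⟨h1, h2⟩
    refine ⟨(satR_prop_congr hθ ρ' ρ v).mp h1, ?_⟩
    intro u hu hsat
    by_cases huS : u ∈ S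
    · exact h2 u (by rw [H3 u huS, hρv]; exact hu) ((satR_prop_congr hθ ρ ρ' u).mp hsat)
    · have hc : ρ u = c := H2 u huS
      have : ρ u < c := lt_of_lt_of_le hu (H1 v)
      rw [hc] at this
      exact absurd this (lt_irrefl c)
  · rintro ⟨h1, h2⟩
    refine ⟨(satR_prop_congr hθ ρ ρ' v).mp h1, ?_⟩
    intro u hu hsat
    by_cases huS : u ∈ S
    · exact h2 u (by rw [← H3 u huS, ← hρv]; exact hu) ((satR_prop_congr hθ ρ' ρ u).mp hsat)
    · exact h2 u (lt_of_le_of_lt (H4 u huS) (by rw [← hρv]; exact hu))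
        ((satR_prop_congr hθ ρ' ρ u).mp hsat)

lemma nf_pres {ρ ρ' : Val P → ℕ∞} {S : Set (Val P)} {c : ℕ∞}
    (H1 : ∀ u, ρ u ≤ c) (H2 : ∀ u, u ∉ S → ρ u = c)
    (H3 : ∀ u ∈ S, ρ' u = ρ u) (H4 : ∀ u, u ∉ S → ρ u ≤ ρ' u)
    {v : Val P} (hv : v ∈ S) {α : PTL P} (hα : InNormalForm α) :
    satR ρ' v α ↔ satR ρ v α := by
  obtain ⟨ths, phi, pss, hths, hphi, hpss, rfl⟩ := hα
  rw [satR_nf, satR_nf]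
  have Hθ : ∀ θ, θ.IsProp → (satR ρ' v (PTL.typ θ) ↔ satR ρ v (PTL.typ θ)) :=
    fun θ hθ => typ_pres H1 H2 H3 H4 hv hθ
  have hφ := satR_prop_congr hphi ρ' ρ v
  constructor
  · intro h hant
    rcases h (fun θ ht => (Hθ θ (hths θ ht)).mpr (hant θ ht)) with h1 | ⟨ψ, hψ, h2⟩
    · exact Or.inl (hφ.mp h1)
    · exact Or.inr ⟨ψ, hψ, (Hθ ψ (hpss ψ hψ)).mp h2⟩
  · intro h hant
    rcases h (fun θ ht => (Hθ θ (hths θ ht)).mp (hant θ ht)) with h1 | ⟨ψ, hψ, h2⟩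
    · exact Or.inl (hφ.mpr h1)
    · exact Or.inr ⟨ψ, hψ, (Hθ ψ (hpss ψ hψ)).mpr h2⟩

lemma satR_congr {ρ ρ' : Val P → ℕ∞} (h : ∀ u w, ρ u < ρ w ↔ ρ' u < ρ' w) :
    ∀ (a : PTL P) (v : Val P), satR ρ v a ↔ satR ρ' v a := by
  intro a
  induction a with
  | atom p => intro v; simp [satR]
  | neg a ih => intro v; simp only [satR]; rw [ih v]
  | conj a b iha ihb => intro v; simp only [satR]; rw [iha v, ihb v]
  | top => intro v; simp [satR]
  | bot => intro v; simp [satR]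
  | typ a ih =>
    intro v
    simp only [satR]
    rw [ih v]
    apply and_congr Iff.rfl
    constructor <;> intro hh u hu hs
    · exact hh u ((h u v).mpr hu) ((ih u).mpr hs)
    · exact hh u ((h u v).mp hu) ((ih u).mp hs)

lemma kext_congr {ρ ρ' : Val P → ℕ∞} (K : Set (PTL P))
    (h : ∀ u w, ρ u < ρ w ↔ ρ' u < ρ' w)
    (hfin : ∀ v, ρ v < ⊤) (hfin' : ∀ v, ρ' v < ⊤) :
    KExt K ρ = KExt K ρ' := by
  ext v
  simp only [KExt, Set.mem_setOf_eq]
  constructor <;> rintro ⟨-, h2⟩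
  · exact ⟨hfin' v, fun a ha => (satR_congr h a v).mp (h2 a ha)⟩
  · exact ⟨hfin v, fun a ha => (satR_congr h a v).mpr (h2 a ha)⟩

lemma orderiso_shape {ρ ρ' : Val P → ℕ∞} {S : Set (Val P)} {c c' : ℕ∞}
    (hS : ∀ v ∈ S, ρ' v = ρ v ∧ ρ v < c ∧ ρ v < c')
    (hc : ∀ v, v ∉ S → ρ v = c) (hc' : ∀ v, v ∉ S → ρ' v = c') :
    ∀ u w, ρ u < ρ w ↔ ρ' u < ρ' w := by
  intro u w
  by_cases hu : u ∈ S <;> by_cases hw : w ∈ S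
  · rw [(hS u hu).1, (hS w hw).1]
  · obtain ⟨e, l, l'⟩ := hS u hu
    rw [hc w hw, hc' w hw, e]
    exact iff_of_true l l'
  · obtain ⟨e, l, l'⟩ := hS w hw
    rw [hc u hu, hc' u hu, e]
    exact iff_of_false (fun hh => absurd (lt_trans l hh) (lt_irrefl _))
      (fun hh => absurd (lt_trans l' hh) (lt_irrefl _))
  · rw [hc u hu, hc w hw, hc' u hu, hc' w hw]
    exact iff_of_false (lt_irrefl _) (lt_irrefl _)

end Aux
section Aux2

variable {P : Type u}

lemma rseq_zero (K : Set (PTL P)) (v : Val P) : Rseq K 0 v = 0 := rfl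

lemma rseq_succ_of_mem {K : Set (PTL P)} {m : ℕ} {v : Val P}
    (h : v ∈ KExt K (Rseq K m)) : Rseq K (m+1) v = Rseq K m v := by
  simp only [Rseq, bump]
  rw [if_pos h]

lemma rseq_succ_of_not_mem {K : Set (PTL P)} {m : ℕ} {v : Val P}
    (h : v ∉ KExt K (Rseq K m)) : Rseq K (m+1) v = Rseq K m v + 1 := by
  simp only [Rseq, bump]
  rw [if_neg h]

lemma rseq_le (K : Set (PTL P)) : ∀ (m : ℕ) (v : Val P), Rseq K m v ≤ (m : ℕ∞)
  | 0, v => le_refl _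
  | m+1, v => by
    by_cases h : v ∈ KExt K (Rseq K m)
    · rw [rseq_succ_of_mem h]
      exact le_trans (rseq_le K m v) (by push_cast; exact le_self_add)
    · rw [rseq_succ_of_not_mem h]
      push_cast
      exact add_le_add (rseq_le K m v) (le_refl 1)

lemma rseq_lt_top (K : Set (PTL P)) (m : ℕ) (v : Val P) : Rseq K m v < ⊤ :=
  lt_of_le_of_lt (rseq_le K m v) (WithTop.coe_lt_top m)

lemma rseq_inv {K : Set (PTL P)} (hK : ∀ a ∈ K, InNormalForm a) :
    ∀ (m : ℕ) (u : Val P), u ∉ KExt K (Rseq K m) → Rseq K m u = (m : ℕ∞) := by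
  intro m
  induction m with
  | zero => intro u _; rfl
  | succ m ih =>
    intro u hu
    by_cases h : u ∈ KExt K (Rseq K m)
    · exfalso
      apply hu
      refine ⟨?_, ?_⟩
      · rw [rseq_succ_of_mem h]; exact h.1
      · intro a ha
        exact (nf_pres (rseq_le K m) ih (fun w hw => rseq_succ_of_mem hw)
          (fun w hw => by rw [rseq_succ_of_not_mem hw]; exact le_self_add) h (hK a ha)).mpr
          (h.2 a ha)
    · rw [rseq_succ_of_not_mem h, ih u h]
      push_cast
      ring

lemma bump_sat_iff {K : Set (PTL P)} (hK : ∀ a ∈ K, InNormalForm a) {m : ℕ} {v : Val P}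
    (h : v ∈ KExt K (Rseq K m)) {α : PTL P} (hα : InNormalForm α) :
    satR (Rseq K (m+1)) v α ↔ satR (Rseq K m) v α :=
  nf_pres (rseq_le K m) (rseq_inv hK m) (fun w hw => rseq_succ_of_mem hw)
    (fun w hw => by rw [rseq_succ_of_not_mem hw]; exact le_self_add) h hα

lemma kext_mono {K : Set (PTL P)} (hK : ∀ a ∈ K, InNormalForm a) (m : ℕ) :
    KExt K (Rseq K m) ⊆ KExt K (Rseq K (m+1)) := fun v hv =>
  ⟨by rw [rseq_succ_of_mem hv]; exact hv.1,
   fun a ha => (bump_sat_iff hK hv (hK a ha)).mpr (hv.2 a ha)⟩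

lemma rseq_frozen {K : Set (PTL P)} (hK : ∀ a ∈ K, InNormalForm a) {m : ℕ} {v : Val P}
    (h : v ∈ KExt K (Rseq K m)) :
    ∀ k, Rseq K (m+k) v = Rseq K m v ∧ v ∈ KExt K (Rseq K (m+k))
  | 0 => ⟨rfl, h⟩
  | k+1 => by
    obtain ⟨h1, h2⟩ := rseq_frozen hK h k
    exact ⟨by rw [show m + (k+1) = (m+k)+1 from rfl, rseq_succ_of_mem h2, h1],
      kext_mono hK (m+k) h2⟩

lemma sat_chain {K : Set (PTL P)} (hK : ∀ a ∈ K, InNormalForm a) {m : ℕ} {v : Val P}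
    (h : v ∈ KExt K (Rseq K m)) {α : PTL P} (hα : InNormalForm α) :
    ∀ k, satR (Rseq K (m+k)) v α ↔ satR (Rseq K m) v α
  | 0 => Iff.rfl
  | k+1 => by
    have h2 := (rseq_frozen hK h k).2
    rw [show m+(k+1) = (m+k)+1 from rfl, bump_sat_iff hK h2 hα]
    exact sat_chain hK h hα k

lemma rank_in_S {K : Set (PTL P)} (hK : ∀ a ∈ K, InNormalForm a) {p : ℕ}
    (hfix : KExt K (Rseq K p) = Sseq K p) :
    ∀ v ∈ KExt K (Rseq K p), Rseq K p v < ((p : ℕ) : ℕ∞) := by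
  cases p with
  | zero =>
    intro v hv
    rw [hfix] at hv
    exact absurd hv (Set.notMem_empty v)
  | succ q =>
    intro v hv
    have hv' : v ∈ KExt K (Rseq K q) := by rw [hfix] at hv; exact hv
    rw [rseq_succ_of_mem hv']
    exact lt_of_le_of_lt (rseq_le K q v) (by exact_mod_cast Nat.lt_succ_self q)

lemma kext_fix_all {K : Set (PTL P)} (hK : ∀ a ∈ K, InNormalForm a) {p : ℕ}
    (hfix : KExt K (Rseq K p) = Sseq K p) :
    ∀ k, KExt K (Rseq K (p+k)) = KExt K (Rseq K p)
  | 0 => rfl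
  | k+1 => by
    have ih := kext_fix_all hK hfix k
    have hiso : ∀ u w, Rseq K (p+k) u < Rseq K (p+k) w ↔
        Rseq K (p+k+1) u < Rseq K (p+k+1) w := by
      apply orderiso_shape (S := KExt K (Rseq K (p+k))) (c := ((p+k : ℕ) : ℕ∞))
        (c' := ((p+k+1 : ℕ) : ℕ∞))
      · intro v hv
        have hvp : v ∈ KExt K (Rseq K p) := ih ▸ hv
        have hfr := (rseq_frozen hK hvp k).1
        have hlt : Rseq K (p+k) v < ((p : ℕ) : ℕ∞) := by
          rw [hfr]; exact rank_in_S hK hfix v hvp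
        exact ⟨rseq_succ_of_mem hv,
          lt_of_lt_of_le hlt (Nat.cast_le.mpr (by omega)),
          lt_of_lt_of_le hlt (Nat.cast_le.mpr (by omega))⟩
      · exact rseq_inv hK (p+k)
      · intro v hv
        rw [rseq_succ_of_not_mem hv, rseq_inv hK (p+k) v hv]
        push_cast
        ring
    calc KExt K (Rseq K (p+(k+1)))
        = KExt K (Rseq K (p+k)) := (kext_congr K hiso (rseq_lt_top K _) (rseq_lt_top K _)).symm
      _ = KExt K (Rseq K p) := ih

lemma sat_stable {K : Set (PTL P)} (hK : ∀ a ∈ K, InNormalForm a) {p : ℕ}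
    (hfix : KExt K (Rseq K p) = Sseq K p) (k : ℕ) :
    ∀ (α : PTL P) (v : Val P), satR (Rseq K (p+k)) v α ↔ satR (Rseq K p) v α := by
  have hiso : ∀ u w, Rseq K p u < Rseq K p w ↔ Rseq K (p+k) u < Rseq K (p+k) w := by
    apply orderiso_shape (S := KExt K (Rseq K p)) (c := ((p : ℕ) : ℕ∞))
      (c' := ((p+k : ℕ) : ℕ∞))
    · intro v hv
      exact ⟨(rseq_frozen hK hv k).1, rank_in_S hK hfix v hv,
        lt_of_lt_of_le (rank_in_S hK hfix v hv) (Nat.cast_le.mpr (by omega))⟩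
    · exact rseq_inv hK p
    · intro v hv
      have hv' : v ∉ KExt K (Rseq K (p+k)) := by
        rw [kext_fix_all hK hfix k]; exact hv
      exact rseq_inv hK (p+k) v hv'
  intro α v
  exact (satR_congr hiso α v).symm

end Aux2
section Aux3

variable {P : Type u}

lemma occupied {K : Set (PTL P)} (hK : ∀ a ∈ K, InNormalForm a) :
    ∀ (m : ℕ) (j : ℕ) (v : Val P), v ∈ KExt K (Rseq K m) →
      Rseq K m v = ((j+1 : ℕ) : ℕ∞) →
      ∃ u ∈ KExt K (Rseq K m), Rseq K m u = (j : ℕ∞) := by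
  intro m
  induction m with
  | zero =>
    intro j v _ hr
    exact absurd hr.symm (by rw [rseq_zero]; exact_mod_cast Nat.succ_ne_zero j)
  | succ m ih =>
    intro j v hv hr
    by_cases h : v ∈ KExt K (Rseq K m)
    · have hrm : Rseq K m v = ((j+1 : ℕ) : ℕ∞) := by rw [← rseq_succ_of_mem h]; exact hr
      obtain ⟨u, hu, hru⟩ := ih j v h hrm
      exact ⟨u, kext_mono hK m hu, by rw [rseq_succ_of_mem hu]; exact hru⟩
    · have h1 : Rseq K (m+1) v = ((m+1 : ℕ) : ℕ∞) := by
        rw [rseq_succ_of_not_mem h, rseq_inv hK m v h]; push_cast; ring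
      have hj : m = j := by
        have := hr.symm.trans h1
        exact_mod_cast Nat.succ_injective (by exact_mod_cast this.symm)
      subst hj
      cases m with
      | zero =>
        by_cases hne : (KExt K (Rseq K 0)).Nonempty
        · obtain ⟨u, hu⟩ := hne
          exact ⟨u, kext_mono hK 0 hu, by rw [rseq_succ_of_mem hu, rseq_zero]; simp⟩
        · exfalso
          rw [Set.not_nonempty_iff_eq_empty] at hne
          have hfix : KExt K (Rseq K 0) = Sseq K 0 := hne
          have := kext_fix_all hK hfix 1
          rw [this, hne] at hv
          exact absurd hv (Set.notMem_empty v)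
      | succ m' =>
        by_cases hne : (KExt K (Rseq K (m'+1)) \ KExt K (Rseq K m')).Nonempty
        · obtain ⟨u, hu1, hu2⟩ := hne
          refine ⟨u, kext_mono hK (m'+1) hu1, ?_⟩
          rw [rseq_succ_of_mem hu1, rseq_succ_of_not_mem hu2, rseq_inv hK m' u hu2]
          push_cast
          ring
        · exfalso
          rw [Set.not_nonempty_iff_eq_empty, Set.diff_eq_empty] at hne
          have heq : KExt K (Rseq K (m'+1)) = KExt K (Rseq K m') :=
            le_antisymm hne (kext_mono hK m')
          have hfix : KExt K (Rseq K (m'+1)) = Sseq K (m'+1) := heq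
          have := kext_fix_all hK hfix 1
          rw [this] at hv
          exact h hv

lemma rank_down {K : Set (PTL P)} (hK : ∀ a ∈ K, InNormalForm a) (p : ℕ) :
    ∀ (i : ℕ) (v : Val P), v ∈ KExt K (Rseq K p) → Rseq K p v = (i : ℕ∞) →
      ∀ j ≤ i, ∃ u ∈ KExt K (Rseq K p), Rseq K p u = (j : ℕ∞) := by
  intro i
  induction i with
  | zero =>
    intro v hv hr j hj
    interval_cases j
    exact ⟨v, hv, hr⟩
  | succ i ih =>
    intro v hv hr j hj
    rcases Nat.lt_or_ge j (i+1) with hj' | hj'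
    · obtain ⟨u, hu, hru⟩ := occupied hK p i v hv hr
      exact ih u hu hru j (by omega)
    · have : j = i + 1 := by omega
      subst this
      exact ⟨v, hv, hr⟩

lemma rstar_pres {K : Set (PTL P)} (hK : ∀ a ∈ K, InNormalForm a) {p : ℕ} {v : Val P}
    (hv : v ∈ KExt K (Rseq K p)) {α : PTL P} (hα : InNormalForm α) :
    satR (toInf (Rseq K p) (KExt K (Rseq K p))) v α ↔ satR (Rseq K p) v α :=
  nf_pres (rseq_le K p) (rseq_inv hK p) (fun w hw => by simp [toInf, hw])
    (fun w hw => by simp [toInf, hw]) hv hα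

lemma typ_zero_iff {ρ : Val P → ℕ∞} {v : Val P} (h : ρ v = 0) (θ : PTL P) :
    satR ρ v (PTL.typ θ) ↔ satR ρ v θ := by
  constructor
  · exact fun hh => hh.1
  · intro hh
    refine ⟨hh, fun u hu => ?_⟩
    rw [h] at hu
    exact absurd hu (by simp)

lemma typ_top_zero {ρ : Val P → ℕ∞} {v : Val P} (h : ρ v = 0) :
    satR ρ v (PTL.typ PTL.top) := by
  rw [typ_zero_iff h]
  trivial

lemma nf_zero_congr {ρ ρ' : Val P → ℕ∞} {v : Val P} (h : ρ v = 0) (h' : ρ' v = 0)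
    {α : PTL P} (hα : InNormalForm α) : satR ρ v α ↔ satR ρ' v α := by
  obtain ⟨ths, phi, pss, hths, hphi, hpss, rfl⟩ := hα
  rw [satR_nf, satR_nf]
  have Hθ : ∀ θ, θ.IsProp → (satR ρ v (PTL.typ θ) ↔ satR ρ' v (PTL.typ θ)) := by
    intro θ hp
    rw [typ_zero_iff h, typ_zero_iff h']
    exact satR_prop_congr hp ρ ρ' v
  have hφ := satR_prop_congr hphi ρ ρ' v
  constructor
  · intro hh hant
    rcases hh (fun θ ht => (Hθ θ (hths θ ht)).mpr (hant θ ht)) with h1 | ⟨ψ, hψ, h2⟩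
    · exact Or.inl (hφ.mp h1)
    · exact Or.inr ⟨ψ, hψ, (Hθ ψ (hpss ψ hψ)).mp h2⟩
  · intro hh hant
    rcases hh (fun θ ht => (Hθ θ (hths θ ht)).mp (hant θ ht)) with h1 | ⟨ψ, hψ, h2⟩
    · exact Or.inl (hφ.mpr h1)
    · exact Or.inr ⟨ψ, hψ, (Hθ ψ (hpss ψ hψ)).mpr h2⟩

lemma min_rank_zero (R : RankedInterp P) (v : Val P) (hfin : R.rk v < ⊤)
    (hmin : ∀ u, ¬ R.rk u < R.rk v) : R.rk v = 0 := by
  obtain ⟨i, hi⟩ := WithTop.ne_top_iff_exists.mp hfin.ne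
  cases i with
  | zero => exact hi.symm
  | succ k =>
    obtain ⟨u, hu⟩ := R.convex v (k+1) hi.symm 0 (Nat.succ_pos k)
    exact absurd (by rw [hu, ← hi]; exact Nat.cast_lt.mpr (Nat.succ_pos k)) (hmin u)

lemma stop_nonempty (K : Set (PTL P)) [Fintype P] [DecidableEq P]
    (hK : ∀ a ∈ K, InNormalForm a) :
    {i : ℕ | 1 ≤ i ∧ Sseq K i = Sseq K (i - 1)}.Nonempty := by
  by_contra h
  rw [Set.not_nonempty_iff_eq_empty] at h
  have hne : ∀ i : ℕ, Sseq K i ≠ Sseq K (i+1) := by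
    intro i heq
    have : (i+1) ∈ {i : ℕ | 1 ≤ i ∧ Sseq K i = Sseq K (i - 1)} :=
      ⟨by omega, by simpa using heq.symm⟩
    rw [h] at this
    exact this
  have hmono : ∀ i : ℕ, Sseq K i ⊆ Sseq K (i+1) := by
    intro i
    cases i with
    | zero => intro x hx; exact absurd hx (Set.notMem_empty x)
    | succ j => exact kext_mono hK j
  have hcard : ∀ i : ℕ, i ≤ (Sseq K i).ncard := by
    intro i
    induction i with
    | zero => exact Nat.zero_le _
    | succ i ih =>
      have hlt : (Sseq K i).ncard < (Sseq K (i+1)).ncard :=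
        Set.ncard_lt_ncard (ssubset_of_subset_of_ne (hmono i) (hne i)) (Set.toFinite _)
      omega
  have h1 := hcard (Nat.card (Val P) + 1)
  have h2 : (Sseq K (Nat.card (Val P) + 1)).ncard ≤ Nat.card (Val P) := by
    rw [← Set.ncard_univ]
    exact Set.ncard_le_ncard (Set.subset_univ _) (Set.toFinite _)
  omega

end Aux3
section Aux4

variable {P : Type u}

lemma kext_K' {K K' : Set (PTL P)} (hK : ∀ a ∈ K, InNormalForm a)
    (hK' : ∀ a ∈ K', InNormalForm a) (hKK' : K ⊆ K') {p : ℕ}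
    (hfix : KExt K (Rseq K p) = Sseq K p)
    (hT : Rstar K = toInf (Rseq K p) (KExt K (Rseq K p)))
    (hsub : ∀ β ∈ K', modelsR (Rstar K) β) :
    ∀ m, KExt K' (Rseq K m) = KExt K (Rseq K m) := by
  intro m
  apply le_antisymm
  · intro v hv
    exact ⟨hv.1, fun a ha => hv.2 a (hKK' ha)⟩
  · intro v hv
    have hmain : v ∈ KExt K (Rseq K p) ∧
        ∀ β, InNormalForm β → (satR (Rseq K m) v β ↔ satR (Rseq K p) v β) := by
      rcases le_or_gt m p with hm | hm
      · obtain ⟨k, rfl⟩ : ∃ k, p = m + k := ⟨p - m, by omega⟩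
        exact ⟨(rseq_frozen hK hv k).2, fun β hβ => (sat_chain hK hv hβ k).symm⟩
      · obtain ⟨k, rfl⟩ : ∃ k, m = p + k := ⟨m - p, by omega⟩
        exact ⟨(kext_fix_all hK hfix k) ▸ hv, fun β hβ => sat_stable hK hfix k β v⟩
    obtain ⟨hvp, hsat⟩ := hmain
    refine ⟨hv.1, fun β hβ => ?_⟩
    have hfin : Rstar K v < ⊤ := by
      rw [hT]
      simp only [toInf]
      rw [if_pos hvp]
      exact rseq_lt_top K p v
    have h1 : satR (Rstar K) v β := hsub β hβ v hfin
    rw [hT] at h1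
    have h2 : satR (Rseq K p) v β := (rstar_pres hK hvp (hK' β hβ)).mp h1
    exact (hsat β (hK' β hβ)).mpr h2

end Aux4
/-- LM-entailment satisfies Inclusion, Ampliativeness, Typical
Entailment and Cumulativity (for normal-form knowledge bases). -/
theorem ptl_CnLM_properties {P : Type u} [Fintype P] [DecidableEq P]
    (K : Set (PTL P)) (hK : ∀ a ∈ K, InNormalForm a) :
    K ⊆ CnLM K ∧
    Cn0 K ⊆ CnLM K ∧
    (∀ a : PTL P, a.IsProp →
      (PTL.impl (PTL.typ PTL.top) a ∈ CnLM K ↔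
        PTL.impl (PTL.typ PTL.top) a ∈ Cn0 K)) ∧
    (∀ K' : Set (PTL P), (∀ a ∈ K', InNormalForm a) →
      K ⊆ K' → K' ⊆ CnLM K → CnLM K' = CnLM K) := by
  obtain ⟨hn1, hfix0⟩ := Nat.sInf_mem (stop_nonempty K hK)
  have hs1 : 1 ≤ stopIdx K := hn1
  have hf0 : Sseq K (stopIdx K) = Sseq K (stopIdx K - 1) := hfix0
  obtain ⟨p, hsn⟩ : ∃ p, stopIdx K = p + 1 := ⟨stopIdx K - 1, by omega⟩
  have hfix : KExt K (Rseq K p) = Sseq K p := by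
    have h1 : Sseq K (p+1) = Sseq K p := by
      rw [← hsn]
      simpa [hsn] using hf0
    simpa [Sseq] using h1
  have hT : Rstar K = toInf (Rseq K p) (KExt K (Rseq K p)) := by
    unfold Rstar
    rw [hsn]
    simp [Sseq]
  -- R* is a ranked model of K
  have hRM : ∀ a ∈ K, modelsR (Rstar K) a := by
    intro a ha v hv
    rw [hT] at hv ⊢
    by_cases h : v ∈ KExt K (Rseq K p)
    · exact (rstar_pres hK h (hK a ha)).mpr (h.2 a ha)
    · exact absurd hv (by simp [toInf, h])
  -- R* is convex
  have hconv : RkConvex (Rstar K) := by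
    intro v i hvi j hji
    rw [hT] at hvi
    by_cases h : v ∈ KExt K (Rseq K p)
    · have hv : Rseq K p v = (i : ℕ∞) := by
        rw [← hvi]
        simp only [toInf]
        rw [if_pos h]
      obtain ⟨u, hu, hru⟩ := rank_down hK p i v h hv j (le_of_lt hji)
      refine ⟨u, ?_⟩
      rw [hT]
      simp only [toInf]
      rw [if_pos hu]
      exact hru
    · exact absurd hvi (by simp [toInf, h])
  have hRI : RankedInterp P := ⟨Rstar K, hconv⟩
  -- Ampliativeness
  have hAmp : Cn0 K ⊆ CnLM K := by
    intro a ha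
    exact ha ⟨Rstar K, hconv⟩ (fun b hb => hRM b hb)
  refine ⟨?_, hAmp, ?_, ?_⟩
  · -- Inclusion
    intro a ha
    exact hRM a ha
  · -- Typical entailment
    intro a haProp
    constructor
    · intro h R hRK v hv
      rw [satR_impl]
      intro htt
      have hmin : ∀ u, ¬ R.rk u < R.rk v := fun u hu => (htt.2 u hu) trivial
      have h0 : R.rk v = 0 := min_rank_zero R v hv hmin
      have hv0 : v ∈ KExt K (Rseq K 0) := by
        refine ⟨by rw [rseq_zero]; exact WithTop.coe_lt_top 0, fun α hα => ?_⟩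
        exact (nf_zero_congr h0 (rseq_zero K v) (hK α hα)).mp (hRK α hα v hv)
      have hfr := rseq_frozen hK hv0 p
      have hvp : v ∈ KExt K (Rseq K p) := by
        have := hfr.2
        rwa [Nat.zero_add] at this
      have hr0 : Rseq K p v = 0 := by
        have := hfr.1
        rwa [Nat.zero_add, rseq_zero] at this
      have hRv : Rstar K v = 0 := by
        rw [hT]
        simp only [toInf]
        rw [if_pos hvp]
        exact hr0
      have hsat := h v (by rw [hRv]; exact WithTop.coe_lt_top 0)
      rw [satR_impl] at hsat
      exact (satR_prop_congr haProp (Rstar K) R.rk v).mp (hsat (typ_top_zero hRv))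
    · intro h
      exact hAmp h
  · -- Cumulativity
    intro K' hK' hKK' hsub
    have hsub' : ∀ β ∈ K', modelsR (Rstar K) β := fun β hβ => hsub hβ
    have hkx := kext_K' hK hK' hKK' hfix hT hsub'
    have hRseq : ∀ m, Rseq K' m = Rseq K m := by
      intro m
      induction m with
      | zero => rfl
      | succ m ih =>
        show bump (Rseq K' m) (KExt K' (Rseq K' m)) = bump (Rseq K m) (KExt K (Rseq K m))
        rw [ih, hkx m]
    have hRseqF : Rseq K' = Rseq K := funext hRseq
    have hSseq : Sseq K' = Sseq K := by
      funext i
      cases i with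
      | zero => rfl
      | succ m =>
        show KExt K' (Rseq K' m) = KExt K (Rseq K m)
        rw [hRseq m, hkx m]
    have hstop : stopIdx K' = stopIdx K := by
      unfold stopIdx
      rw [hSseq]
    have hRstar : Rstar K' = Rstar K := by
      unfold Rstar
      rw [hSseq, hstop, hRseqF]
    unfold CnLM
    rw [hRstar]
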